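/- Let Δ ∈ ℂ^{E×E} be a diagonal matrix each of whose diagonal entries is 1 or −1, let σ : ℂ → ℂ be odd (σ(−x) = −σ(x)) applied entrywise, and let Z_e ∈ ℂ^{E×c}, Z_i ∈ ℂ^{E×b}, W_a ∈ ℂ^{c×c}, W_b ∈ ℂ^{b×c}. Then σ( ((Δ · Z_e) · W_a) ⊙ (Z_i · W_b) + Δ · Z_e ) = Δ · σ( (Z_e · W_a) ⊙ (Z_i · W_b) + Z_e ); that is, the equivariant EIGN fusion operation commutes with orientation changes of the equivariant input. -/
import Mathlib

open Matrix

/-- The equivariant EIGN fusion operation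
`σ((Z_e W_a) ⊙ (Z_i W_b) + Z_e)` commutes with orientation changes `Δ` (a diagonal
matrix with entries `±1`) of the equivariant input, provided `σ` is odd. -/
theorem eign_equivariant_fusion
    {E c b : Type*} [Fintype E] [DecidableEq E] [Fintype c] [Fintype b]
    (D : E → ℂ) (hD : ∀ e, D e = 1 ∨ D e = -1)
    (σ : ℂ → ℂ) (hσ : ∀ x, σ (-x) = -σ x)
    (Ze : Matrix E c ℂ) (Zi : Matrix E b ℂ)
    (Wa : Matrix c c ℂ) (Wb : Matrix b c ℂ) :
    ((((Matrix.diagonal D * Ze) * Wa).hadamard (Zi * Wb)) + Matrix.diagonal D * Ze).map σ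
      = Matrix.diagonal D * ((((Ze * Wa).hadamard (Zi * Wb)) + Ze).map σ) := by
  ext e j
  have h1 : ∀ (M : Matrix E c ℂ), (Matrix.diagonal D * M) e j = D e * M e j := by
    intro M; simp [Matrix.diagonal_mul]
  simp only [Matrix.map_apply, Matrix.add_apply, Matrix.hadamard_apply, h1,
    Matrix.mul_assoc] at *
  rcases hD e with h | h <;> simp [h, ← hσ] <;> ring_nf
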